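/- For integers k ≥ 2 and α ≥ 1, the sequence ℓ ↦ 7^{k−1} · C(k+ℓ−1, k−1), taken modulo 7^α, is periodic with period length dividing 7^{α−1}. -/
import Mathlib
open Nat

private lemma asc_modeq (s P : ℕ) : ∀ a b : ℕ, a ≡ b [MOD s] →
    a.ascFactorial P ≡ b.ascFactorial P [MOD s] := by
  induction P with
  | zero => intro a b _; rfl
  | succ P ih =>
    intro a b h
    rw [Nat.ascFactorial_succ, Nat.ascFactorial_succ]
    exact (h.add_right P).mul (ih a b h)

private lemma val_lt (n : ℕ) (hn : 1 ≤ n) :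
    (n !).factorization 7 ≤ n - 1 := by
  have h7 : Fact (Nat.Prime 7) := ⟨by norm_num⟩
  have hleg := sub_one_mul_padicValNat_factorial (p := 7) n
  rw [Nat.factorization_def _ (by norm_num)]
  set v := padicValNat 7 (n !) with hv
  have h6 : 6 * v ≤ n := by
    have : (7 - 1) * v = n - (Nat.digits 7 n).sum := hleg
    omega
  omega

/-- for k ≥ 2 and α ≥ 1, the sequence ℓ ↦ 7^{k−1}·C(k+ℓ−1, k−1) is
periodic modulo 7^α with period length dividing 7^{α−1}; in particular 7^{α−1}
itself is a period. -/
theorem statement14 (k α : ℕ) (hk : 2 ≤ k) (hα : 1 ≤ α) :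
    ∀ ℓ : ℕ,
      7 ^ (k - 1) * ((k + (ℓ + 7 ^ (α - 1)) - 1).choose (k - 1)) ≡
        7 ^ (k - 1) * ((k + ℓ - 1).choose (k - 1)) [MOD 7 ^ α] := by
  intro ℓ
  set P := k - 1 with hP
  set s := 7 ^ (α - 1) with hs
  set A := (k + (ℓ + s) - 1).choose P with hA
  set B := (k + ℓ - 1).choose P with hB
  -- key identity: P ! * A and P ! * B are ascending factorials
  have hkP : k = P + 1 := by omega
  have hFA : (ℓ + s + 1).ascFactorial P = P ! * A := by
    rw [Nat.ascFactorial_eq_factorial_mul_choose' ]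
    congr 2
    omega
  have hFB : (ℓ + 1).ascFactorial P = P ! * B := by
    rw [Nat.ascFactorial_eq_factorial_mul_choose' ]
    congr 2
    omega
  have hspos : 0 < s := by positivity
  -- congruence of products mod s
  have hmod : P ! * A ≡ P ! * B [MOD s] := by
    rw [← hFA, ← hFB]
    refine asc_modeq s P _ _ ?_
    refine ((Nat.modEq_iff_dvd' (by omega)).mpr ?_).symm
    have h' : ℓ + s + 1 - (ℓ + 1) = s := by omega
    rw [h']
  -- split P ! into 7-part and coprime part
  set v := (P !).factorization 7 with hv
  have hF : P ! = 7 ^ v * ordCompl[7] (P !) := (Nat.ordProj_mul_ordCompl_eq_self (P !) 7).symm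
  set m := ordCompl[7] (P !) with hm
  have hm7 : ¬ (7 ∣ m) := Nat.not_dvd_ordCompl (by norm_num) (Nat.factorial_ne_zero P)
  have hcop : Nat.gcd s m = 1 := by
    have h1 : Nat.Coprime 7 m := (Nat.Prime.coprime_iff_not_dvd (by norm_num)).mpr hm7
    exact h1.pow_left _
  have hmod2 : m * (7 ^ v * A) ≡ m * (7 ^ v * B) [MOD s] := by
    have e1 : m * (7 ^ v * A) = P ! * A := by rw [hF]; ring
    have e2 : m * (7 ^ v * B) = P ! * B := by rw [hF]; ring
    rw [e1, e2]; exact hmod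
  have hmod3 : 7 ^ v * A ≡ 7 ^ v * B [MOD s] :=
    Nat.ModEq.cancel_left_of_coprime hcop hmod2
  -- multiply by remaining powers of 7
  have hvP : v ≤ P - 1 := val_lt P (by omega)
  have hP1 : 1 ≤ P := by omega
  have hmod4 : 7 ^ (P - v) * (7 ^ v * A) ≡ 7 ^ (P - v) * (7 ^ v * B)
      [MOD 7 ^ (P - v) * s] := hmod3.mul_left' _
  have e3 : 7 ^ (P - v) * 7 ^ v = 7 ^ P := by
    rw [← pow_add]; congr 1; omega
  have hmod5 : 7 ^ P * A ≡ 7 ^ P * B [MOD 7 ^ (P - v) * s] := by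
    rw [← e3, mul_assoc, mul_assoc]; exact hmod4
  have hdvd : 7 ^ α ∣ 7 ^ (P - v) * s := by
    rw [hs, ← pow_add]
    exact pow_dvd_pow 7 (by omega)
  exact hmod5.of_dvd hdvd
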